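/- If A and B are graded C-algebras that are integral domains, then the Segre product A ⊠ B = ⊕_{d≥0} A_d ⊗_C B_d is an integral domain. -/

import Mathlib

open TensorProduct


lemma repr_map_eq {C A B ι : Type*} [CommRing C] [CommRing A] [CommRing B]
    [Algebra ℂ C] [Algebra ℂ A] [Algebra ℂ B]
    (e : Module.Basis ι ℂ B) (f : C →ₐ[ℂ] A) (t : C ⊗[ℂ] B) (k : ι) :
    (Algebra.TensorProduct.basis A e).repr
        (Algebra.TensorProduct.map f (AlgHom.id ℂ B) t) k
      = f ((Algebra.TensorProduct.basis C e).repr t k) := by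
  induction t using TensorProduct.induction_on with
  | zero => simp
  | tmul c b =>
      simp [Algebra.TensorProduct.basis_repr_tmul, Algebra.smul_def]
  | add s t hs ht => simp [hs, ht]

lemma repr_lift_term {B ι σ : Type*} [DecidableEq ι] [CommRing B] [Algebra ℂ B]
    (e : Module.Basis ι ℂ B) (s : Finset ι) (f : {k // k ∈ s} → MvPolynomial σ ℂ)
    (l : ι) (k : {x // x ∈ s}) :
    ((Algebra.TensorProduct.basis (MvPolynomial σ ℂ) e).repr (f k ⊗ₜ[ℂ] e ↑k)) l
      = if (↑k : ι) = l then f k else 0 := by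
  classical
  rw [Algebra.TensorProduct.basis_repr_tmul, Finsupp.smul_apply, Finsupp.mapRange_apply,
    Module.Basis.repr_self, Finsupp.single_apply]
  split_ifs with hkl
  · simp [Algebra.smul_def]
  · simp

lemma repr_lift_mem {B ι σ : Type*} [DecidableEq ι] [CommRing B] [Algebra ℂ B]
    (e : Module.Basis ι ℂ B) (s : Finset ι) (f : {k // k ∈ s} → MvPolynomial σ ℂ)
    (l : ι) (h : l ∈ s) :
    (Algebra.TensorProduct.basis (MvPolynomial σ ℂ) e).repr
        (∑ k ∈ s.attach, f k ⊗ₜ[ℂ] e ↑k) l = f ⟨l, h⟩ := by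
  classical
  rw [map_sum, Finsupp.finset_sum_apply,
    Finset.sum_congr rfl fun k _ => repr_lift_term e s f l k,
    Finset.sum_eq_single (⟨l, h⟩ : {x // x ∈ s})]
  · rw [if_pos rfl]
  · intro b _ hb
    rw [if_neg fun hbl => hb (Subtype.ext hbl)]
  · intro habs; exact absurd (Finset.mem_attach _ _) habs

lemma repr_lift_not_mem {B ι σ : Type*} [DecidableEq ι] [CommRing B] [Algebra ℂ B]
    (e : Module.Basis ι ℂ B) (s : Finset ι) (f : {k // k ∈ s} → MvPolynomial σ ℂ)
    (l : ι) (h : l ∉ s) :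
    (Algebra.TensorProduct.basis (MvPolynomial σ ℂ) e).repr
        (∑ k ∈ s.attach, f k ⊗ₜ[ℂ] e ↑k) l = 0 := by
  classical
  rw [map_sum, Finsupp.finset_sum_apply,
    Finset.sum_congr rfl fun k _ => repr_lift_term e s f l k,
    Finset.sum_eq_zero]
  intro k _
  rw [if_neg (fun hkl : (↑k : ι) = l => h (hkl ▸ k.2))]

/-- Over `ℂ` (algebraically closed), the tensor product of two integral domains
has no zero divisors. -/
theorem tensor_noZeroDivisors
    (A B : Type) [CommRing A] [CommRing B] [Algebra ℂ A] [Algebra ℂ B]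
    [IsDomain A] [IsDomain B] (x y : A ⊗[ℂ] B) (hxy : x * y = 0) :
    x = 0 ∨ y = 0 := by
  classical
  by_contra hcon
  push_neg at hcon
  obtain ⟨hx, hy⟩ := hcon
  set ι := Module.Free.ChooseBasisIndex ℂ B with hι
  set e : Module.Basis ι ℂ B := Module.Free.chooseBasis ℂ B with he
  set bA := Algebra.TensorProduct.basis A e with hbA
  set α := bA.repr x with hα
  set γ := bA.repr y with hγ
  have hxα : ∃ k, α k ≠ 0 := by
    by_contra h
    push_neg at h
    apply hx
    apply bA.repr.injective
    rw [map_zero]; ext k; exact h k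
  have hyγ : ∃ k, γ k ≠ 0 := by
    by_contra h
    push_neg at h
    apply hy
    apply bA.repr.injective
    rw [map_zero]; ext k; exact h k
  obtain ⟨k0, hk0⟩ := hxα
  obtain ⟨m0, hm0⟩ := hyγ
  set Sx := α.support with hSx
  set Sy := γ.support with hSy
  set σ := {k // k ∈ Sx} ⊕ {k // k ∈ Sy} with hσ
  set v : σ → A := Sum.elim (fun k => α ↑k) (fun k => γ ↑k) with hv
  set P : Ideal (MvPolynomial σ ℂ) := RingHom.ker (MvPolynomial.aeval v : MvPolynomial σ ℂ →ₐ[ℂ] A) with hP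
  have hPprime : P.IsPrime := RingHom.ker_isPrime _
  set X : MvPolynomial σ ℂ ⊗[ℂ] B :=
    ∑ k ∈ Sx.attach, (MvPolynomial.X (Sum.inl k) : MvPolynomial σ ℂ) ⊗ₜ[ℂ] e ↑k with hX
  set Y : MvPolynomial σ ℂ ⊗[ℂ] B :=
    ∑ k ∈ Sy.attach, (MvPolynomial.X (Sum.inr k) : MvPolynomial σ ℂ) ⊗ₜ[ℂ] e ↑k with hY
  set F := Algebra.TensorProduct.map (MvPolynomial.aeval v : MvPolynomial σ ℂ →ₐ[ℂ] A) (AlgHom.id ℂ B) with hF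
  have hFX : F X = x := by
    apply bA.repr.injective
    ext l
    rw [hbA, repr_map_eq e _ X l]
    by_cases h : l ∈ Sx
    · rw [repr_lift_mem e Sx _ l h]
      simp [hv, hα]
      rfl
    · rw [repr_lift_not_mem e Sx _ l h, map_zero]
      exact (Finsupp.notMem_support_iff.mp h).symm
  have hFY : F Y = y := by
    apply bA.repr.injective
    ext l
    rw [hbA, repr_map_eq e _ Y l]
    by_cases h : l ∈ Sy
    · rw [repr_lift_mem e Sy _ l h]
      simp [hv, hγ]
      rfl
    · rw [repr_lift_not_mem e Sy _ l h, map_zero]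
      exact (Finsupp.notMem_support_iff.mp h).symm
  set bM := Algebra.TensorProduct.basis (MvPolynomial σ ℂ) e with hbM
  have hcoords : ∀ l, bM.repr (X * Y) l ∈ P := by
    intro l
    rw [hP, RingHom.mem_ker]
    have := repr_map_eq e (MvPolynomial.aeval v) (X * Y) l
    rw [← this, map_mul, hFX, hFY, hxy, map_zero]
    simp
  -- key dichotomy on points of the zero locus
  have key : ∀ z ∈ MvPolynomial.zeroLocus ℂ P,
      (∀ k : {k // k ∈ Sx}, z (Sum.inl k) = 0) ∨
      (∀ k : {k // k ∈ Sy}, z (Sum.inr k) = 0) := by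
    intro z hz
    set G := Algebra.TensorProduct.map (MvPolynomial.aeval z : MvPolynomial σ ℂ →ₐ[ℂ] ℂ)
      (AlgHom.id ℂ B) with hG
    have hG0 : G (X * Y) = 0 := by
      apply (Algebra.TensorProduct.basis ℂ e).repr.injective
      ext l
      rw [map_zero, hG, repr_map_eq e _ (X * Y) l]
      have hmem := hcoords l
      have : MvPolynomial.eval z (bM.repr (X * Y) l) = 0 :=
        MvPolynomial.mem_zeroLocus_iff.mp hz _ hmem
      rw [Finsupp.coe_zero, Pi.zero_apply]
      exact this
    have hmul : (Algebra.TensorProduct.lid ℂ B) (G X) *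
        (Algebra.TensorProduct.lid ℂ B) (G Y) = 0 := by
      rw [← map_mul, ← map_mul, hG0]; simp
    rcases mul_eq_zero.mp hmul with h | h
    · left
      intro k
      have hGX : G X = 0 := by
        apply (Algebra.TensorProduct.lid ℂ B).injective
        rw [h, map_zero]
      have := repr_map_eq e (MvPolynomial.aeval z) X (↑k : ι)
      rw [hGX, map_zero, Finsupp.coe_zero, Pi.zero_apply] at this
      rw [repr_lift_mem e Sx _ _ k.2] at this
      simpa using this.symm
    · right
      intro k
      have hGY : G Y = 0 := by
        apply (Algebra.TensorProduct.lid ℂ B).injective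
        rw [h, map_zero]
      have := repr_map_eq e (MvPolynomial.aeval z) Y (↑k : ι)
      rw [hGY, map_zero, Finsupp.coe_zero, Pi.zero_apply] at this
      rw [repr_lift_mem e Sy _ _ k.2] at this
      simpa using this.symm
  -- products of the generators lie in P
  have hprod : ∀ (k : {k // k ∈ Sx}) (m : {k // k ∈ Sy}), α ↑k * γ ↑m = 0 := by
    intro k m
    have hVI : (MvPolynomial.X (Sum.inl k) * MvPolynomial.X (Sum.inr m) : MvPolynomial σ ℂ)
        ∈ MvPolynomial.vanishingIdeal ℂ (MvPolynomial.zeroLocus ℂ P) := by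
      rw [MvPolynomial.mem_vanishingIdeal_iff]
      intro z hz
      rw [map_mul, MvPolynomial.aeval_X, MvPolynomial.aeval_X]
      rcases key z hz with h | h
      · rw [h k, zero_mul]
      · rw [h m, mul_zero]
    rw [MvPolynomial.vanishingIdeal_zeroLocus_eq_radical, hPprime.radical] at hVI
    have := RingHom.mem_ker.mp hVI
    simpa [hv] using this
  have := hprod ⟨k0, Finsupp.mem_support_iff.mpr hk0⟩ ⟨m0, Finsupp.mem_support_iff.mpr hm0⟩
  rcases mul_eq_zero.mp this with h | h
  · exact hk0 h
  · exact hm0 h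

/-- The degree-`d` piece of the Segre product `A ⊠ B`, realized inside `A ⊗[ℂ] B`. -/
noncomputable def segrePiece {A B : Type} [CommRing A] [CommRing B]
    [Algebra ℂ A] [Algebra ℂ B]
    (𝒜 : ℕ → Submodule ℂ A) (ℬ : ℕ → Submodule ℂ B) (d : ℕ) :
    Submodule ℂ (A ⊗[ℂ] B) :=
  Submodule.span ℂ {z : A ⊗[ℂ] B | ∃ a ∈ 𝒜 d, ∃ b ∈ ℬ d, z = a ⊗ₜ[ℂ] b}

/-- If `A` and `B` are graded `ℂ`-algebras which are integral
domains, then the Segre product `A ⊠ B = ⊕_d A_d ⊗ B_d` (realized inside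
`A ⊗[ℂ] B`) is an integral domain: it has no zero divisors. -/
theorem segreProduct_isDomain
    (A B : Type) [CommRing A] [CommRing B] [Algebra ℂ A] [Algebra ℂ B]
    [IsDomain A] [IsDomain B]
    (𝒜 : ℕ → Submodule ℂ A) (ℬ : ℕ → Submodule ℂ B)
    [GradedAlgebra 𝒜] [GradedAlgebra ℬ] :
    ∀ x y : A ⊗[ℂ] B, x ∈ (⨆ d : ℕ, segrePiece 𝒜 ℬ d) →
      y ∈ (⨆ d : ℕ, segrePiece 𝒜 ℬ d) → x * y = 0 → x = 0 ∨ y = 0 := by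
  intro x y _ _ hxy
  exact tensor_noZeroDivisors A B x y hxy
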